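/- Let p be a prime and let λ_1 > λ_2 ≥ 1 be integers; write r := λ_1 − λ_2 with base-p digits r_i. Then λ_2 = Σ_{i=0}^{u} r̅_i p^i for some u ≥ 0 with r_u ≠ p − 1 if and only if λ_1 ≡ −1 (mod p^{l_p(λ_2)}). (This is the equivalence established in equations (5.2)–(5.3): membership of λ_2 in the second subset of Ψ_p(λ_1 − λ_2) is exactly James' criterion for the two-part partition (λ_1, λ_2).) -/

import Mathlib

/-- `lpexp p t` is the least nonnegative integer `l` with `t < p ^ l`. -/
noncomputable def lpexp (p t : ℕ) : ℕ := sInf {l : ℕ | t < p ^ l}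

/-- The `i`-th base-`p` digit of `r`. -/
def pdigit (p r i : ℕ) : ℕ := (r / p ^ i) % p

/-- For a base-`p` digit `a`, `pbar p a = p - 1 - a` is the unique `a̅` with
`0 ≤ a̅ ≤ p - 1` and `a + a̅ ≡ p - 1 (mod p)`. -/
def pbar (p a : ℕ) : ℕ := p - 1 - a

lemma mod_pow_succ' (p r n : ℕ) (hp : 0 < p) :
    r % p ^ (n + 1) = r % p ^ n + pdigit p r n * p ^ n := by
  have hq : 0 < p ^ n := Nat.pow_pos hp
  have hle : p ^ n ≤ p * p ^ n := Nat.le_mul_of_pos_left _ hp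
  have h1 : r % p ^ n + pdigit p r n * p ^ n < p ^ (n + 1) := by
    have hm := Nat.mod_lt r hq
    have h2 : pdigit p r n < p := Nat.mod_lt _ hp
    have h3 : pdigit p r n * p ^ n ≤ (p - 1) * p ^ n := Nat.mul_le_mul_right _ (by omega)
    have h4 : (p - 1) * p ^ n = p * p ^ n - p ^ n := by rw [Nat.sub_one_mul]
    have h5 : p ^ (n + 1) = p * p ^ n := by rw [pow_succ, mul_comm]
    omega
  have key : r = p ^ (n + 1) * (r / p ^ (n + 1)) + (r % p ^ n + pdigit p r n * p ^ n) := by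
    have e3 : r / p ^ n / p = r / p ^ (n + 1) := by
      rw [Nat.div_div_eq_div_mul, ← pow_succ]
    calc r = p ^ n * (r / p ^ n) + r % p ^ n := (Nat.div_add_mod _ _).symm
    _ = p ^ n * (p * (r / p ^ n / p) + r / p ^ n % p) + r % p ^ n := by
        rw [Nat.div_add_mod, Nat.div_add_mod]; exact (Nat.div_add_mod _ _).symm
    _ = p ^ (n + 1) * (r / p ^ (n + 1)) + (r % p ^ n + pdigit p r n * p ^ n) := by
        rw [← e3, pdigit, pow_succ]; ring
  conv_lhs => rw [key]
  rw [Nat.mul_add_mod, Nat.mod_eq_of_lt h1]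

lemma mod_pow_eq_sum (p r n : ℕ) (hp : 0 < p) :
    r % p ^ n = ∑ i ∈ Finset.range n, pdigit p r i * p ^ i := by
  induction n with
  | zero => simp [Nat.mod_one]
  | succ n ih => rw [Finset.sum_range_succ, ← ih, mod_pow_succ' p r n hp]

lemma geom_sum_nat (p n : ℕ) (hp : 0 < p) :
    ∑ i ∈ Finset.range n, (p - 1) * p ^ i = p ^ n - 1 := by
  induction n with
  | zero => simp
  | succ n ih =>
    have h1 : 1 ≤ p ^ n := Nat.one_le_pow _ _ hp
    have hle : p ^ n ≤ p * p ^ n := Nat.le_mul_of_pos_left _ hp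
    have h4 : (p - 1) * p ^ n = p * p ^ n - p ^ n := by rw [Nat.sub_one_mul]
    have h5 : p ^ (n + 1) = p * p ^ n := by rw [pow_succ, mul_comm]
    rw [Finset.sum_range_succ, ih]
    omega

lemma pbar_sum (p r n : ℕ) (hp : 0 < p) :
    ∑ i ∈ Finset.range n, pbar p (pdigit p r i) * p ^ i = p ^ n - 1 - r % p ^ n := by
  have h1 : 1 ≤ p ^ n := Nat.one_le_pow _ _ hp
  have hm : r % p ^ n < p ^ n := Nat.mod_lt _ (by positivity)
  have key : (∑ i ∈ Finset.range n, pbar p (pdigit p r i) * p ^ i) + r % p ^ n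
      = p ^ n - 1 := by
    rw [mod_pow_eq_sum p r n hp, ← Finset.sum_add_distrib, ← geom_sum_nat p n hp]
    refine Finset.sum_congr rfl fun i _ => ?_
    have h2 : pdigit p r i < p := Nat.mod_lt _ hp
    rw [← Nat.add_mul, pbar]
    congr 1
    omega
  omega

theorem second_subset_iff_james_criterion (p l1 l2 : ℕ) (hp : p.Prime)
    (h12 : l2 < l1) (h2 : 1 ≤ l2) :
    (∃ u : ℕ, pdigit p (l1 - l2) u ≠ p - 1 ∧
        l2 = ∑ i ∈ Finset.range (u + 1), pbar p (pdigit p (l1 - l2) i) * p ^ i) ↔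
      p ^ lpexp p l2 ∣ l1 + 1 := by
  have hp1 : 1 < p := hp.one_lt
  have hp0 : 0 < p := hp.pos
  set r := l1 - l2 with hr
  have hl1 : l1 = l2 + r := by omega
  have hne : {l : ℕ | l2 < p ^ l}.Nonempty := ⟨l2, Nat.lt_pow_self hp1⟩
  have hlp_mem : l2 < p ^ lpexp p l2 := Nat.sInf_mem hne
  constructor
  · rintro ⟨u, hu, hsum⟩
    have hsum' : l2 = p ^ (u + 1) - 1 - r % p ^ (u + 1) := by
      rw [hsum, pbar_sum p r (u + 1) hp0]
    have hdig : pdigit p r u < p := Nat.mod_lt _ hp0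
    have hbar : 1 ≤ pbar p (pdigit p r u) := by unfold pbar; omega
    have hge : p ^ u ≤ l2 := by
      rw [hsum]
      calc p ^ u ≤ pbar p (pdigit p r u) * p ^ u := Nat.le_mul_of_pos_left _ hbar
      _ ≤ _ := Finset.single_le_sum (f := fun i => pbar p (pdigit p r i) * p ^ i)
          (fun i _ => Nat.zero_le _) (Finset.self_mem_range_succ u)
    have h1u : 1 ≤ p ^ (u + 1) := Nat.one_le_pow _ _ hp0
    have hmod : r % p ^ (u + 1) < p ^ (u + 1) := Nat.mod_lt _ (by positivity)
    have hlt : l2 < p ^ (u + 1) := by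
      generalize hs : r % p ^ (u + 1) = s at hsum' hmod
      omega
    have hlp : lpexp p l2 = u + 1 := by
      have hle : lpexp p l2 ≤ u + 1 := Nat.sInf_le hlt
      have hgt : ¬ lpexp p l2 ≤ u := by
        intro h
        have : p ^ lpexp p l2 ≤ p ^ u := Nat.pow_le_pow_right hp0 h
        omega
      omega
    rw [hlp]
    have hdm := Nat.div_add_mod r (p ^ (u + 1))
    have : l1 + 1 = p ^ (u + 1) * (r / p ^ (u + 1)) + p ^ (u + 1) := by
      generalize hs : r % p ^ (u + 1) = s at hsum' hmod hdm
      omega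
    rw [this]
    exact Dvd.dvd.add (Dvd.intro _ rfl) dvd_rfl
  · intro hdvd
    set l := lpexp p l2 with hl
    have hl1' : 1 ≤ l := by
      by_contra h
      have h0 : l = 0 := by omega
      rw [h0, pow_zero] at hlp_mem
      omega
    have h1q : 1 ≤ p ^ l := Nat.one_le_pow _ _ hp0
    have hgeu : p ^ (l - 1) ≤ l2 := by
      by_contra h
      have hmem : l - 1 ∈ {l : ℕ | l2 < p ^ l} := by push_neg at h; exact h
      have h5 : lpexp p l2 ≤ l - 1 := Nat.sInf_le hmem
      omega
    obtain ⟨k, hk⟩ := hdvd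
    have hmod : r % p ^ l < p ^ l := Nat.mod_lt _ (by positivity)
    have hdm := Nat.div_add_mod r (p ^ l)
    have hdvd2 : p ^ l ∣ l2 + r % p ^ l + 1 := by
      have hd1 : p ^ l ∣ p ^ l * k := Dvd.intro _ rfl
      have hd2 : p ^ l ∣ p ^ l * (r / p ^ l) := Dvd.intro _ rfl
      have heq : p ^ l * k = p ^ l * (r / p ^ l) + (l2 + r % p ^ l + 1) := by
        rw [← hk]
        generalize hs : r % p ^ l = s at hdm hmod ⊢
        omega
      have h6 := Nat.dvd_sub hd1 hd2
      rw [heq, Nat.add_sub_cancel_left] at h6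
      exact h6
    obtain ⟨c, hc⟩ := hdvd2
    have hs0 : 0 ≤ r % p ^ l := Nat.zero_le _
    have hc0 : c ≠ 0 := by
      rintro rfl
      generalize hs : r % p ^ l = s at hc
      omega
    have hc1 : c = 1 := by
      have hlt2 : p ^ l * c < p ^ l * 2 := by omega
      have := Nat.lt_of_mul_lt_mul_left hlt2
      omega
    rw [hc1, mul_one] at hc
    refine ⟨l - 1, ?_, ?_⟩
    · intro heq
      have hbz : pbar p (pdigit p r (l - 1)) = 0 := by rw [heq, pbar]; omega
      have hsplit : ∑ i ∈ Finset.range (l - 1 + 1), pbar p (pdigit p r i) * p ^ i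
          = ∑ i ∈ Finset.range (l - 1), pbar p (pdigit p r i) * p ^ i := by
        rw [Finset.sum_range_succ, hbz, zero_mul, add_zero]
      have hl' : l - 1 + 1 = l := by omega
      have hval : l2 = ∑ i ∈ Finset.range (l - 1 + 1), pbar p (pdigit p r i) * p ^ i := by
        rw [hl', pbar_sum p r l hp0]; omega
      have hsm : ∑ i ∈ Finset.range (l - 1), pbar p (pdigit p r i) * p ^ i
          = p ^ (l - 1) - 1 - r % p ^ (l - 1) := pbar_sum p r (l - 1) hp0
      have h7 : 1 ≤ p ^ (l - 1) := Nat.one_le_pow _ _ hp0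
      have hm' : r % p ^ (l - 1) < p ^ (l - 1) := Nat.mod_lt _ (by positivity)
      generalize hsa : r % p ^ (l - 1) = s1 at hsm hm'
      generalize hsb : r % p ^ l = s2 at hc hmod
      omega
    · have hl' : l - 1 + 1 = l := by omega
      rw [hl', pbar_sum p r l hp0]
      generalize hs : r % p ^ l = s at hc hmod
      omega
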